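/- arXiv:0909.0073 — 4 statements merged into one kernel-verified Lean document; each statement's English description precedes it below -/
import Mathlib

section
/- Let I be the toric ideal of the simplified no-reciprocation design matrix Z̃ₙ, in variables p_{ij}(1,0), p_{ij}(0,1), p_{ij}(1,1) for i < j. Then I = I_{Aₙ} + T, where I_{Aₙ} is the toric ideal of the incidence matrix of Gₙ in the variables p_{ij}(1,0), p_{ij}(0,1), and T is the ideal generated by the binomials p_{ij}(0,1)·p_{ij}(1,0) − p_{ij}(1,1) for all i < j. -/
open MvPolynomial

/-- Dyads: ordered pairs (i,j) with i < j. -/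
def Dy (n : ℕ) : Type := {p : Fin n × Fin n // p.1 < p.2}

instance (n : ℕ) : Fintype (Dy n) := by unfold Dy; infer_instance
instance (n : ℕ) : DecidableEq (Dy n) := by unfold Dy; infer_instance

/-- `a` exponent of the dyad state: 0 ↦ (1,0), 1 ↦ (0,1), 2 ↦ (1,1). -/
def aOf (k : Fin 3) : ℤ := if k = 1 then 0 else 1

/-- `b` exponent of the dyad state. -/
def bOf (k : Fin 3) : ℤ := if k = 0 then 0 else 1

/-- The binomial p^{u⁺} − p^{u⁻} associated to an integer vector u. -/
noncomputable def binom {σ : Type*} [Fintype σ] (u : σ → ℤ) : MvPolynomial σ ℚ :=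
  (∏ c, X c ^ (u c).toNat) - ∏ c, X c ^ (-u c).toNat

/-- The toric ideal of an integer matrix M: the ideal generated by all binomials
p^{u⁺} − p^{u⁻} with u ∈ ker M. -/
noncomputable def toricIdeal {ρ σ : Type*} [Fintype ρ] [Fintype σ]
    (M : Matrix ρ σ ℤ) : Ideal (MvPolynomial σ ℚ) :=
  Ideal.span {f | ∃ u : σ → ℤ, M.mulVec u = 0 ∧ f = binom u}

/-- Design matrix Z̃ₙ of the simplified p₁ model with no reciprocation: rows indexed by
α₁,…,αₙ, β₁,…,βₙ, θ; columns by p_{ij}(1,0), p_{ij}(0,1), p_{ij}(1,1) for i < j. -/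
def Ztilde (n : ℕ) : Matrix (Fin n ⊕ Fin n ⊕ Unit) (Dy n × Fin 3) ℤ :=
  fun r c =>
    match r with
    | Sum.inl t =>
        aOf c.2 * (if t = c.1.1.1 then 1 else 0) + bOf c.2 * (if t = c.1.1.2 then 1 else 0)
    | Sum.inr (Sum.inl t) =>
        aOf c.2 * (if t = c.1.1.2 then 1 else 0) + bOf c.2 * (if t = c.1.1.1 then 1 else 0)
    | Sum.inr (Sum.inr _) => aOf c.2 + bOf c.2

/-- Incidence matrix of the bipartite graph Gₙ, with columns indexed by the variables
of the simplified model: the variable p_{ij}(1,0) corresponds to the edge (α_i, β_j),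
p_{ij}(0,1) to the edge (α_j, β_i), and the p_{ij}(1,1)-columns are zero. -/
def AGv (n : ℕ) : Matrix (Fin n ⊕ Fin n) (Dy n × Fin 3) ℤ :=
  fun r c =>
    match r with
    | Sum.inl t =>
        if c.2 = 0 then (if t = c.1.1.1 then 1 else 0)
        else if c.2 = 1 then (if t = c.1.1.2 then 1 else 0) else 0
    | Sum.inr t =>
        if c.2 = 0 then (if t = c.1.1.2 then 1 else 0)
        else if c.2 = 1 then (if t = c.1.1.1 then 1 else 0) else 0

/- ### auxiliary material -/

noncomputable def mono {σ : Type*} [Fintype σ] (w : σ → ℕ) : MvPolynomial σ ℚ :=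
  ∏ c, X c ^ w c

lemma binom_eq {σ : Type*} [Fintype σ] (u : σ → ℤ) :
    binom u = mono (fun c => (u c).toNat) - mono (fun c => (-u c).toNat) := rfl

lemma mono_add {σ : Type*} [Fintype σ] (w₁ w₂ : σ → ℕ) :
    mono (fun c => w₁ c + w₂ c) = mono w₁ * mono w₂ := by
  simp [mono, pow_add, Finset.prod_mul_distrib]

lemma mono_single {σ : Type*} [Fintype σ] [DecidableEq σ] (a : σ) :
    mono (fun c => if c = a then 1 else 0) = X a := by
  rw [mono, Finset.prod_eq_single a]
  · simp
  · intro b _ hb; simp [hb]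
  · simp

lemma sub_aeval_mem {σ : Type*} (g : σ → MvPolynomial σ ℚ) (f : MvPolynomial σ ℚ) :
    f - aeval g f ∈ Ideal.span (Set.range fun c => X c - g c) := by
  induction f using MvPolynomial.induction_on with
  | C a => simp [aeval_C, MvPolynomial.algebraMap_eq]
  | add p q hp hq =>
      have h : p + q - aeval g (p + q) = (p - aeval g p) + (q - aeval g q) := by
        rw [map_add]; ring
      rw [h]; exact Ideal.add_mem _ hp hq
  | mul_X p i hp =>
      have h : p * X i - aeval g (p * X i)
          = (p - aeval g p) * X i + aeval g p * (X i - g i) := by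
        rw [map_mul, aeval_X]; ring
      rw [h]
      exact Ideal.add_mem _ (Ideal.mul_mem_right _ _ hp)
        (Ideal.mul_mem_left _ _ (Ideal.subset_span ⟨i, rfl⟩))

noncomputable def subG (n : ℕ) : Dy n × Fin 3 → MvPolynomial (Dy n × Fin 3) ℚ :=
  fun c => if c.2 = 2 then X (c.1, 0) * X (c.1, 1) else X c

def Wmap {n : ℕ} (w : Dy n × Fin 3 → ℕ) : Dy n × Fin 3 → ℕ :=
  fun c => if c.2 = 0 then w (c.1, 0) + w (c.1, 2)
    else if c.2 = 1 then w (c.1, 1) + w (c.1, 2) else 0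

lemma aeval_mono {n : ℕ} (w : Dy n × Fin 3 → ℕ) :
    aeval (subG n) (mono w) = mono (Wmap w) := by
  rw [mono, map_prod, mono]
  simp only [map_pow, aeval_X]
  rw [Fintype.prod_prod_type, Fintype.prod_prod_type]
  refine Finset.prod_congr rfl fun e _ => ?_
  rw [Fin.prod_univ_three, Fin.prod_univ_three]
  simp only [subG, Wmap, Fin.reduceEq, if_false, if_true, reduceIte, pow_zero]
  ring

lemma sum3 {n : ℕ} (f : Dy n × Fin 3 → ℤ) :
    ∑ c, f c = ∑ e : Dy n, (f (e, 0) + f (e, 1) + f (e, 2)) := by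
  rw [Fintype.sum_prod_type]
  refine Finset.sum_congr rfl fun e _ => ?_
  rw [Fin.sum_univ_three]

lemma mulVec_apply {ρ σ : Type*} [Fintype ρ] [Fintype σ] (M : Matrix ρ σ ℤ) (u : σ → ℤ)
    (r : ρ) : M.mulVec u r = ∑ c, M r c * u c := rfl

lemma col2 {n : ℕ} (r : Fin n ⊕ Fin n ⊕ Unit) (e : Dy n) :
    Ztilde n r (e, 2) = Ztilde n r (e, 0) + Ztilde n r (e, 1) := by
  rcases r with t | t | t <;> simp [Ztilde, aOf, bOf]

def uT {n : ℕ} (e : Dy n) : Dy n × Fin 3 → ℤ :=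
  fun c => if c = (e, 0) then 1 else if c = (e, 1) then 1 else if c = (e, 2) then -1 else 0

lemma uT_ne {n : ℕ} (e d : Dy n) (h : d ≠ e) (k : Fin 3) : uT e (d, k) = 0 := by
  simp [uT, Prod.ext_iff, h]

lemma hB {n : ℕ} (e : Dy n) : (Ztilde n).mulVec (uT e) = 0 := by
  funext r
  rw [mulVec_apply, Pi.zero_apply, sum3]
  apply Finset.sum_eq_zero
  intro d _
  by_cases h : d = e
  · subst h
    have h0 : uT d (d, 0) = 1 := by simp [uT]
    have h1 : uT d (d, 1) = 1 := by simp [uT, Prod.ext_iff]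
    have h2 : uT d (d, 2) = -1 := by simp [uT, Prod.ext_iff]
    rw [h0, h1, h2, col2]; ring
  · simp [uT_ne e d h]

lemma binom_uT {n : ℕ} (e : Dy n) :
    binom (uT e) = X (e, (1 : Fin 3)) * X (e, (0 : Fin 3)) - X (e, (2 : Fin 3)) := by
  rw [binom_eq]
  have hpos : (fun c => ((uT e) c).toNat)
      = fun c => ((if c = (e, 1) then 1 else 0) + if c = (e, 0) then 1 else 0 : ℕ) := by
    funext c
    by_cases h0 : c = (e, 0)
    · subst h0; simp [uT, Prod.ext_iff]
    · by_cases h1 : c = (e, 1)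
      · subst h1; simp [uT, Prod.ext_iff]
      · by_cases h2 : c = (e, 2) <;> simp [uT, h0, h1, h2]
  have hneg : (fun c => ((-uT e c)).toNat)
      = fun c => (if c = (e, 2) then 1 else 0 : ℕ) := by
    funext c
    by_cases h0 : c = (e, 0)
    · subst h0; simp [uT, Prod.ext_iff]
    · by_cases h1 : c = (e, 1)
      · subst h1; simp [uT, Prod.ext_iff]
      · by_cases h2 : c = (e, 2) <;> simp [uT, h0, h1, h2]
  rw [hpos, hneg, mono_add, mono_single, mono_single, mono_single]

lemma hA {n : ℕ} (u : Dy n × Fin 3 → ℤ) (hu : (AGv n).mulVec u = 0)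
    (h2 : ∀ e : Dy n, u (e, 2) = 0) : (Ztilde n).mulVec u = 0 := by
  have hrow : ∀ r : Fin n ⊕ Fin n, ∑ c, AGv n r c * u c = 0 := by
    intro r; rw [← mulVec_apply, hu]; rfl
  funext r
  rw [mulVec_apply, Pi.zero_apply]
  rcases r with t | t | t
  · rw [sum3, ← hrow (Sum.inl t), sum3]
    refine Finset.sum_congr rfl fun e _ => ?_
    simp [Ztilde, AGv, aOf, bOf, h2 e]
  · rw [sum3, ← hrow (Sum.inr t), sum3]
    refine Finset.sum_congr rfl fun e _ => ?_
    simp [Ztilde, AGv, aOf, bOf, h2 e]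
  · have key : ∀ e : Dy n, ∑ t : Fin n,
        (AGv n (Sum.inl t) (e, 0) * u (e, 0) + AGv n (Sum.inl t) (e, 1) * u (e, 1)
          + AGv n (Sum.inl t) (e, 2) * u (e, 2)) = u (e, 0) + u (e, 1) := by
      intro e
      simp [AGv, h2 e, Finset.sum_add_distrib, ← Finset.sum_mul, Finset.sum_ite_eq']
    have tot : ∑ e : Dy n, (u (e, 0) + u (e, 1)) = 0 := by
      calc ∑ e : Dy n, (u (e, 0) + u (e, 1))
          = ∑ e : Dy n, ∑ t : Fin n,
            (AGv n (Sum.inl t) (e, 0) * u (e, 0) + AGv n (Sum.inl t) (e, 1) * u (e, 1)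
              + AGv n (Sum.inl t) (e, 2) * u (e, 2)) :=
            (Finset.sum_congr rfl fun e _ => (key e).symm)
        _ = ∑ t : Fin n, ∑ e : Dy n,
            (AGv n (Sum.inl t) (e, 0) * u (e, 0) + AGv n (Sum.inl t) (e, 1) * u (e, 1)
              + AGv n (Sum.inl t) (e, 2) * u (e, 2)) := Finset.sum_comm
        _ = ∑ t : Fin n, ∑ c, AGv n (Sum.inl t) c * u c :=
            (Finset.sum_congr rfl fun t _ =>
              (sum3 (fun c => AGv n (Sum.inl t) c * u c)).symm)
        _ = 0 := by simp [hrow]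
    rw [sum3 (fun c => Ztilde n (Sum.inr (Sum.inr t)) c * u c)]
    rw [show ∑ e : Dy n,
        (Ztilde n (Sum.inr (Sum.inr t)) (e, 0) * u (e, 0)
          + Ztilde n (Sum.inr (Sum.inr t)) (e, 1) * u (e, 1)
          + Ztilde n (Sum.inr (Sum.inr t)) (e, 2) * u (e, 2))
        = ∑ e : Dy n, (u (e, 0) + u (e, 1)) from
      Finset.sum_congr rfl fun e _ => by simp [Ztilde, aOf, bOf, h2 e]]
    exact tot

def vOf {n : ℕ} (u : Dy n × Fin 3 → ℤ) : Dy n × Fin 3 → ℤ :=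
  fun c => if c.2 = 0 then u (c.1, 0) + u (c.1, 2)
    else if c.2 = 1 then u (c.1, 1) + u (c.1, 2) else 0

lemma hC {n : ℕ} (u : Dy n × Fin 3 → ℤ) (hu : (Ztilde n).mulVec u = 0) :
    (AGv n).mulVec (vOf u) = 0 := by
  have hrow : ∀ r, ∑ c, Ztilde n r c * u c = 0 := by
    intro r; rw [← mulVec_apply, hu]; rfl
  funext r
  rw [mulVec_apply, Pi.zero_apply]
  rcases r with t | t
  · rw [sum3 (fun c => AGv n (Sum.inl t) c * vOf u c), ← hrow (Sum.inl t),
      sum3 (fun c => Ztilde n (Sum.inl t) c * u c)]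
    refine Finset.sum_congr rfl fun e _ => ?_
    simp only [AGv, Ztilde, vOf, aOf, bOf, Fin.reduceEq, if_false, if_true, reduceIte]
    ring
  · rw [sum3 (fun c => AGv n (Sum.inr t) c * vOf u c), ← hrow (Sum.inr (Sum.inl t)),
      sum3 (fun c => Ztilde n (Sum.inr (Sum.inl t)) c * u c)]
    refine Finset.sum_congr rfl fun e _ => ?_
    simp only [AGv, Ztilde, vOf, aOf, bOf, Fin.reduceEq, if_false, if_true, reduceIte]
    ring

def mOf {n : ℕ} (u : Dy n × Fin 3 → ℤ) : Dy n × Fin 3 → ℕ :=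
  fun c => Wmap (fun c => (u c).toNat) c - (vOf u c).toNat

lemma Wpos {n : ℕ} (u : Dy n × Fin 3 → ℤ) :
    Wmap (fun c => (u c).toNat) = fun c => mOf u c + (vOf u c).toNat := by
  funext c
  obtain ⟨e, k⟩ := c
  fin_cases k <;> simp [Wmap, vOf, mOf] <;> omega

lemma Wneg {n : ℕ} (u : Dy n × Fin 3 → ℤ) :
    Wmap (fun c => (-u c).toNat) = fun c => mOf u c + (-vOf u c).toNat := by
  funext c
  obtain ⟨e, k⟩ := c
  fin_cases k <;> simp [Wmap, vOf, mOf] <;> omega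

lemma aeval_binom {n : ℕ} (u : Dy n × Fin 3 → ℤ) :
    aeval (subG n) (binom u) = mono (mOf u) * binom (vOf u) := by
  rw [binom_eq, map_sub, aeval_mono, aeval_mono, Wpos, Wneg, mono_add, mono_add,
    binom_eq, mul_sub]

/-- Decomposition I_{Z̃ₙ} = I_{Aₙ} + T: the toric ideal of the simplified
no-reciprocation model is the sum of the toric ideal of the incidence matrix of Gₙ
(in the variables p_{ij}(1,0), p_{ij}(0,1)) and the ideal T generated by the
binomials p_{ij}(0,1)·p_{ij}(1,0) − p_{ij}(1,1). -/
theorem stmt7 (n : ℕ) (hn : 2 ≤ n) :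
    toricIdeal (Ztilde n) =
      Ideal.span {f | ∃ u : Dy n × Fin 3 → ℤ,
          (AGv n).mulVec u = 0 ∧ (∀ e : Dy n, u (e, 2) = 0) ∧ f = binom u} ⊔
      Ideal.span {f | ∃ e : Dy n,
          f = X (e, (1 : Fin 3)) * X (e, (0 : Fin 3)) - X (e, (2 : Fin 3))} := by
  apply le_antisymm
  · rw [toricIdeal, Ideal.span_le]
    rintro f ⟨u, hu, rfl⟩
    have hT : binom u - aeval (subG n) (binom u) ∈
        Ideal.span {f | ∃ e : Dy n,
          f = X (e, (1 : Fin 3)) * X (e, (0 : Fin 3)) - X (e, (2 : Fin 3))} := by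
      refine Ideal.span_le.mpr ?_ (sub_aeval_mem _ _)
      rintro _ ⟨c, rfl⟩
      obtain ⟨e, k⟩ := c
      fin_cases k
      · simp [subG]
      · simp [subG]
      · have h : (X (e, (1 : Fin 3)) * X (e, (0 : Fin 3)) - X (e, (2 : Fin 3))
              : MvPolynomial (Dy n × Fin 3) ℚ) ∈
            Ideal.span {f | ∃ e : Dy n,
              f = X (e, (1 : Fin 3)) * X (e, (0 : Fin 3)) - X (e, (2 : Fin 3))} :=
          Ideal.subset_span ⟨e, rfl⟩
        have h2 := neg_mem h
        rw [SetLike.mem_coe]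
        convert h2 using 1
        show X (e, (2:Fin 3)) - subG n (e, (2:Fin 3)) = _
        simp only [subG, Fin.reduceEq, reduceIte, if_true, if_false]
        ring
    have hS : mono (mOf u) * binom (vOf u) ∈
        Ideal.span {f | ∃ u : Dy n × Fin 3 → ℤ,
          (AGv n).mulVec u = 0 ∧ (∀ e : Dy n, u (e, 2) = 0) ∧ f = binom u} :=
      Ideal.mul_mem_left _ _
        (Ideal.subset_span ⟨vOf u, hC u hu, fun e => by simp [vOf], rfl⟩)
    have hdecomp : binom u
        = (binom u - aeval (subG n) (binom u)) + mono (mOf u) * binom (vOf u) := by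
      rw [← aeval_binom]; ring
    rw [hdecomp]
    exact Ideal.add_mem _ (Ideal.mem_sup_right hT) (Ideal.mem_sup_left hS)
  · apply sup_le
    · rw [Ideal.span_le]
      rintro f ⟨u, hu, h2, rfl⟩
      exact Ideal.subset_span ⟨u, hA u hu h2, rfl⟩
    · rw [Ideal.span_le]
      rintro f ⟨e, rfl⟩
      exact Ideal.subset_span ⟨uT e, hB e, (binom_uT e).symm⟩
end

section
/- For n ≥ 4, the toric ideal of the simplified edge-dependent-reciprocation design matrix Ẽₙ decomposes as I_{Ẽₙ} = I_{Aₙ} + Q, where I_{Aₙ} is the toric ideal of the incidence matrix of the bipartite graph Gₙ (in the variables p_{ij}(1,0), p_{ij}(0,1)), and Q is the ideal generated by the quadrics p_{ij}(1,1)·p_{kl}(1,1) − p_{ik}(1,1)·p_{jl}(1,1) for all indices 1 ≤ i, j, k, l ≤ n (with p_{ij}(1,1) := p_{ji}(1,1) for i > j). -/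
open MvPolynomial

/-- The dyad {i,j} of an unordered pair of distinct indices. -/
def dyad {n : ℕ} (i j : Fin n) (h : i ≠ j) : Dy n :=
  if hij : i < j then ⟨(i, j), hij⟩ else ⟨(j, i), (h.symm).lt_of_le (not_lt.mp hij)⟩

/-- Design matrix Ẽₙ of the simplified p₁ model with edge-dependent reciprocation:
rows indexed by α₁,…,αₙ, β₁,…,βₙ, θ (= inr inr inl 0), ρ (= inr inr inl 1),
ρ₁,…,ρₙ (= inr inr inr t); columns by p_{ij}(1,0), p_{ij}(0,1), p_{ij}(1,1), i < j. -/
def Etilde (n : ℕ) : Matrix (Fin n ⊕ Fin n ⊕ Fin 2 ⊕ Fin n) (Dy n × Fin 3) ℤ :=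
  fun r c =>
    match r with
    | Sum.inl t =>
        aOf c.2 * (if t = c.1.1.1 then 1 else 0) + bOf c.2 * (if t = c.1.1.2 then 1 else 0)
    | Sum.inr (Sum.inl t) =>
        aOf c.2 * (if t = c.1.1.2 then 1 else 0) + bOf c.2 * (if t = c.1.1.1 then 1 else 0)
    | Sum.inr (Sum.inr (Sum.inl s)) => if s = 0 then aOf c.2 + bOf c.2 else aOf c.2 * bOf c.2
    | Sum.inr (Sum.inr (Sum.inr t)) =>
        aOf c.2 * bOf c.2 * ((if t = c.1.1.1 then 1 else 0) + (if t = c.1.1.2 then 1 else 0))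

-- helper lemmas
lemma dyad_comm {n : ℕ} (i j : Fin n) (h : i ≠ j) : dyad i j h = dyad j i h.symm := by
  unfold dyad
  rcases lt_trichotomy i j with hlt | he | hgt
  · erw [dif_pos hlt, dif_neg (not_lt.mpr hlt.le)]
  · exact absurd he h
  · erw [dif_neg (not_lt.mpr hgt.le), dif_pos hgt]

lemma mem_dyad_iff {n : ℕ} (t i j : Fin n) (h : i ≠ j) :
    (t = (dyad i j h).1.1 ∨ t = (dyad i j h).1.2) ↔ (t = i ∨ t = j) := by
  unfold dyad; by_cases hij : i < j
  · erw [dif_pos hij]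
  · erw [dif_neg hij]; simp; tauto

lemma dyad_eta {n : ℕ} (e : Dy n) (h : e.1.1 ≠ e.1.2) : dyad e.1.1 e.1.2 h = e := by
  unfold dyad; erw [dif_pos e.2]; exact Subtype.ext rfl

lemma eq_dyad_of_mem {n : ℕ} (e : Dy n) (t : Fin n) (h : t = e.1.1 ∨ t = e.1.2) :
    ∃ s, ∃ (hts : t ≠ s), e = dyad t s hts := by
  have hlt := e.2
  rcases h with h | h
  · subst h; exact ⟨e.1.2, ne_of_lt hlt, (dyad_eta e (ne_of_lt hlt)).symm⟩
  · subst h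
    refine ⟨e.1.1, (ne_of_lt hlt).symm, ?_⟩
    rw [← dyad_comm e.1.1 e.1.2 (ne_of_lt hlt), dyad_eta]

lemma dyad_ne {n : ℕ} (i j k l : Fin n) (h1 : i ≠ j) (h2 : k ≠ l)
    (hik : i ≠ k) (hil : i ≠ l) : dyad i j h1 ≠ dyad k l h2 := by
  intro he
  have hm : i = (dyad i j h1).1.1 ∨ i = (dyad i j h1).1.2 :=
    (mem_dyad_iff i i j h1).mpr (Or.inl rfl)
  rw [he] at hm
  rcases (mem_dyad_iff i k l h2).mp hm with h | h
  · exact hik h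
  · exact hil h


section Comb
variable {n : ℕ}

/-- indicator weight of vertex t in dyad e -/
def wt (t : Fin n) (e : Dy n) : ℕ := (if t = e.1.1 then 1 else 0) + (if t = e.1.2 then 1 else 0)

/-- degree of vertex t in a multigraph a -/
def deg (t : Fin n) (a : Dy n → ℕ) : ℕ := ∑ e : Dy n, wt t e * a e

/-- single edge -/
def sgl (e0 : Dy n) : Dy n → ℕ := fun e => if e = e0 then 1 else 0

lemma wt_dyad (t i j : Fin n) (h : i ≠ j) :
    wt t (dyad i j h) = (if t = i then 1 else 0) + (if t = j then 1 else 0) := by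
  unfold wt dyad; by_cases hij : i < j
  · erw [dif_pos hij]
  · erw [dif_neg hij]; exact add_comm _ _

lemma deg_add (t : Fin n) (a b : Dy n → ℕ) : deg t (a + b) = deg t a + deg t b := by
  unfold deg; rw [← Finset.sum_add_distrib]
  exact Finset.sum_congr rfl (fun e _ => by simp [Pi.add_apply, Nat.mul_add])

lemma deg_sgl (t : Fin n) (e0 : Dy n) : deg t (sgl e0) = wt t e0 := by
  unfold deg sgl
  rw [Finset.sum_eq_single e0]
  · simp
  · intro b _ hb; simp [hb]
  · intro h; exact absurd (Finset.mem_univ e0) h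

lemma le_deg (e : Dy n) (a : Dy n → ℕ) : a e ≤ deg e.1.1 a := by
  unfold deg
  have h1 : wt e.1.1 e * a e ≤ ∑ f : Dy n, wt e.1.1 f * a f :=
    Finset.single_le_sum (f := fun f => wt e.1.1 f * a f) (fun f _ => Nat.zero_le _)
      (Finset.mem_univ e)
  have h2 : 1 ≤ wt e.1.1 e := by unfold wt; simp
  calc a e = 1 * a e := (one_mul _).symm
    _ ≤ wt e.1.1 e * a e := Nat.mul_le_mul_right _ h2
    _ ≤ _ := h1

lemma deg_pos_exists (t : Fin n) (b : Dy n → ℕ) (h : 0 < deg t b) :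
    ∃ e : Dy n, 0 < b e ∧ (t = e.1.1 ∨ t = e.1.2) := by
  by_contra hc
  push_neg at hc
  have : deg t b = 0 := by
    unfold deg
    apply Finset.sum_eq_zero
    intro e _
    rcases Nat.eq_zero_or_pos (b e) with h0 | h0
    · rw [h0, Nat.mul_zero]
    · have := hc e h0
      unfold wt
      rw [if_neg this.1, if_neg this.2]
      ring
  omega

/-- the monomial in the (·,2) variables -/
noncomputable def M2 (a : Dy n → ℕ) : MvPolynomial (Dy n × Fin 3) ℚ :=
  ∏ e : Dy n, X (e, (2 : Fin 3)) ^ a e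

lemma M2_add (a b : Dy n → ℕ) : M2 (a + b) = M2 a * M2 b := by
  unfold M2; rw [← Finset.prod_mul_distrib]
  exact Finset.prod_congr rfl (fun e _ => by rw [Pi.add_apply, pow_add])

lemma M2_sgl (e0 : Dy n) : M2 (sgl e0) = X (e0, (2 : Fin 3)) := by
  unfold M2 sgl
  rw [Finset.prod_eq_single e0]
  · simp
  · intro b _ hb; simp [hb]
  · intro h; exact absurd (Finset.mem_univ e0) h

/-- the ideal Q -/
noncomputable def QI (n : ℕ) : Ideal (MvPolynomial (Dy n × Fin 3) ℚ) :=
  Ideal.span {f | ∃ (i j k l : Fin n) (hij : i ≠ j) (hkl : k ≠ l)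
      (hik : i ≠ k) (hjl : j ≠ l),
      f = X (dyad i j hij, (2 : Fin 3)) * X (dyad k l hkl, (2 : Fin 3)) -
          X (dyad i k hik, (2 : Fin 3)) * X (dyad j l hjl, (2 : Fin 3))}

lemma quad_mem_QI (i j k l : Fin n) (hij : i ≠ j) (hkl : k ≠ l) (hik : i ≠ k) (hjl : j ≠ l) :
    X (dyad i j hij, (2 : Fin 3)) * X (dyad k l hkl, (2 : Fin 3)) -
      X (dyad i k hik, (2 : Fin 3)) * X (dyad j l hjl, (2 : Fin 3)) ∈ QI n :=
  Ideal.subset_span ⟨i, j, k, l, hij, hkl, hik, hjl, rfl⟩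

lemma switch_mem_QI (c : Dy n → ℕ) (i j k l : Fin n)
    (hij : i ≠ j) (hkl : k ≠ l) (hik : i ≠ k) (hjl : j ≠ l) :
    M2 (c + sgl (dyad i j hij) + sgl (dyad k l hkl)) -
      M2 (c + sgl (dyad i k hik) + sgl (dyad j l hjl)) ∈ QI n := by
  rw [M2_add, M2_add, M2_add, M2_add, M2_sgl, M2_sgl, M2_sgl, M2_sgl,
    mul_assoc, mul_assoc, ← mul_sub]
  exact Ideal.mul_mem_left _ _ (quad_mem_QI i j k l hij hkl hik hjl)

/-- decomposition of a multigraph containing two distinct edges -/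
lemma decomp_two (a : Dy n → ℕ) (e1 e2 : Dy n) (h1 : 0 < a e1) (h2 : 0 < a e2)
    (hne : e1 ≠ e2) : a = (fun e => a e - sgl e1 e - sgl e2 e) + sgl e1 + sgl e2 := by
  funext e
  simp only [Pi.add_apply, sgl]
  by_cases ha : e = e1
  · subst ha; rw [if_pos rfl, if_neg hne]; omega
  · rw [if_neg ha]
    by_cases hb : e = e2
    · subst hb; rw [if_pos rfl]; omega
    · rw [if_neg hb]; omega

lemma decomp_one (a : Dy n → ℕ) (e1 : Dy n) (h1 : 0 < a e1) :
    a = (fun e => a e - sgl e1 e) + sgl e1 := by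
  funext e
  simp only [Pi.add_apply, sgl]
  by_cases ha : e = e1
  · subst ha; rw [if_pos rfl]; omega
  · rw [if_neg ha]; omega

end Comb


section Key
variable {n : ℕ}

lemma sum_sgl (e0 : Dy n) : ∑ f : Dy n, sgl e0 f = 1 := by
  unfold sgl
  rw [Finset.sum_eq_single e0]
  · simp
  · intro b _ hb; simp [hb]
  · intro h; exact absurd (Finset.mem_univ e0) h

lemma le_deg' (e : Dy n) (t : Fin n) (h : t = e.1.1 ∨ t = e.1.2) (a : Dy n → ℕ) :
    a e ≤ deg t a := by
  unfold deg
  have h1 : wt t e * a e ≤ ∑ f : Dy n, wt t f * a f :=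
    Finset.single_le_sum (f := fun f => wt t f * a f) (fun f _ => Nat.zero_le _)
      (Finset.mem_univ e)
  have h2 : 1 ≤ wt t e := by unfold wt; rcases h with h | h <;> simp [h]
  calc a e = 1 * a e := (one_mul _).symm
    _ ≤ wt t e * a e := Nat.mul_le_mul_right _ h2
    _ ≤ _ := h1

lemma deg_switch (c : Dy n → ℕ) (i j k l : Fin n)
    (hij : i ≠ j) (hkl : k ≠ l) (hik : i ≠ k) (hjl : j ≠ l) (t : Fin n) :
    deg t (c + sgl (dyad i j hij) + sgl (dyad k l hkl)) =
      deg t (c + sgl (dyad i k hik) + sgl (dyad j l hjl)) := by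
  rw [deg_add, deg_add, deg_add, deg_add, deg_sgl, deg_sgl, deg_sgl, deg_sgl,
    wt_dyad, wt_dyad, wt_dyad, wt_dyad]
  split_ifs <;> omega

lemma sum_switch (c : Dy n → ℕ) (e1 e2 f1 f2 : Dy n) :
    ∑ f : Dy n, (c + sgl e1 + sgl e2) f = ∑ f : Dy n, (c + sgl f1 + sgl f2) f := by
  simp only [Pi.add_apply]
  rw [Finset.sum_add_distrib, Finset.sum_add_distrib, Finset.sum_add_distrib,
    Finset.sum_add_distrib, sum_sgl, sum_sgl, sum_sgl, sum_sgl]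

lemma key : ∀ (N : ℕ) (a b : Dy n → ℕ), (∑ e : Dy n, a e) = N →
    (∀ t, deg t a = deg t b) → M2 a - M2 b ∈ QI n := by
  intro N
  induction N using Nat.strong_induction_on with
  | _ N IH =>
    intro a b hN hdeg
    by_cases hcom : ∃ e, 0 < a e ∧ 0 < b e
    · -- common edge: factor it out
      obtain ⟨e, hae, hbe⟩ := hcom
      have ha : a = (fun f => a f - sgl e f) + sgl e := decomp_one a e hae
      have hb : b = (fun f => b f - sgl e f) + sgl e := decomp_one b e hbe
      set a' : Dy n → ℕ := fun f => a f - sgl e f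
      set b' : Dy n → ℕ := fun f => b f - sgl e f
      have hsum : (∑ f : Dy n, a' f) + 1 = N := by
        have h2 : ∑ f : Dy n, (a' + sgl e) f = (∑ f : Dy n, a' f) + ∑ f : Dy n, sgl e f :=
          by simp only [Pi.add_apply]; exact Finset.sum_add_distrib
        rw [← ha, hN, sum_sgl] at h2
        omega
      have hdeg' : ∀ t, deg t a' = deg t b' := by
        intro t
        have h1 := hdeg t
        have h2 := deg_add t a' (sgl e)
        have h3 := deg_add t b' (sgl e)
        rw [← ha] at h2; rw [← hb] at h3
        omega
      have hmem := IH (N - 1) (by omega) a' b' (by omega) hdeg'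
      rw [ha, hb, M2_add, M2_add, ← sub_mul]
      exact Ideal.mul_mem_right _ _ hmem
    · have hdisj : ∀ e, ¬(0 < a e ∧ 0 < b e) := fun e he => hcom ⟨e, he⟩
      by_cases hA : ∀ e, a e = 0
      · -- a = 0, then b = 0
        have hda : ∀ t, deg t a = 0 := by
          intro t; unfold deg
          exact Finset.sum_eq_zero (fun e _ => by rw [hA e, Nat.mul_zero])
        have hB : ∀ e, b e = 0 := by
          intro e
          have h1 := le_deg' e e.1.1 (Or.inl rfl) b
          rw [← hdeg e.1.1, hda e.1.1] at h1
          omega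
        have h1 : M2 a = 1 := Finset.prod_eq_one (fun e _ => by rw [hA e, pow_zero])
        have h2 : M2 b = 1 := Finset.prod_eq_one (fun e _ => by rw [hB e, pow_zero])
        rw [h1, h2, sub_self]
        exact Ideal.zero_mem _
      · push_neg at hA
        obtain ⟨e0, he0⟩ := hA
        have hae0 : 0 < a e0 := Nat.pos_of_ne_zero he0
        have hij : e0.1.1 ≠ e0.1.2 := ne_of_lt e0.2
        set i := e0.1.1 with hidef
        set j := e0.1.2 with hjdef
        have he0d : dyad i j hij = e0 := dyad_eta e0 hij
        -- find an edge of b at i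
        have hdi : 0 < deg i b := by
          rw [← hdeg i]
          exact lt_of_lt_of_le hae0 (le_deg' e0 i (Or.inl rfl) a)
        obtain ⟨f, hbf, hmemf⟩ := deg_pos_exists i b hdi
        obtain ⟨k, hik, hf⟩ := eq_dyad_of_mem f i hmemf
        have hbf' : 0 < b e0 → False := fun h => hdisj e0 ⟨hae0, h⟩
        have hkj : k ≠ j := by
          intro h
          subst h
          apply hbf'
          have : f = e0 := by rw [hf]; exact he0d
          rwa [← this]
        -- find an edge of a at k
        have hdk : 0 < deg k a := by
          rw [hdeg k]
          exact lt_of_lt_of_le hbf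
            (le_deg' f k (by rw [hf]; exact (mem_dyad_iff k i k hik).mpr (Or.inr rfl)) b)
        obtain ⟨g, hag, hmemg⟩ := deg_pos_exists k a hdk
        obtain ⟨l, hkl, hg⟩ := eq_dyad_of_mem g k hmemg
        have hli : l ≠ i := by
          intro h
          subst h
          apply hdisj g ⟨hag, ?_⟩
          have : g = f := by
            rw [hg, hf, dyad_comm]
          rwa [this]
        by_cases hlj : l = j
        · -- bad case: switch b using edges f = {i,k} and h' = {j,m}
          subst hlj
          -- g = dyad k j
          have hdj : 0 < deg j b := by
            rw [← hdeg j]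
            exact lt_of_lt_of_le hae0 (le_deg' e0 j (Or.inr rfl) a)
          obtain ⟨h', hbh, hmemh⟩ := deg_pos_exists j b hdj
          obtain ⟨m, hjm, hh⟩ := eq_dyad_of_mem h' j hmemh
          have hmi : m ≠ i := by
            intro h
            subst h
            apply hbf'
            have : h' = e0 := by rw [hh, dyad_comm]; exact he0d
            rwa [← this]
          have hmk : m ≠ k := by
            intro h
            subst h
            apply hdisj g ⟨hag, ?_⟩
            have : h' = g := by rw [hh, hg, dyad_comm]
            rwa [← this]
          have hfh : f ≠ h' := by
            rw [hf, hh]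
            exact dyad_ne i k j m hik hjm hij (Ne.symm hmi)
          have hbdec : b = (fun e => b e - sgl f e - sgl h' e) + sgl (dyad i k hik)
              + sgl (dyad j m hjm) := by
            rw [← hf, ← hh]
            exact decomp_two b f h' hbf hbh hfh
          set b'' : Dy n → ℕ := fun e => b e - sgl f e - sgl h' e
          set bstar : Dy n → ℕ := b'' + sgl (dyad i j hij) + sgl (dyad k m (Ne.symm hmk))
          have hQ1 : M2 b - M2 bstar ∈ QI n := by
            rw [hbdec]
            exact switch_mem_QI b'' i k j m hik hjm hij (Ne.symm hmk)
          -- bstar shares edge e0 = dyad i j with a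
          have hbse0 : 0 < bstar e0 := by
            have : sgl (dyad i j hij) e0 = 1 := by rw [he0d]; simp [sgl]
            simp only [bstar, Pi.add_apply]
            omega
          have hdegbs : ∀ t, deg t a = deg t bstar := by
            intro t
            rw [hdeg t, hbdec]
            exact deg_switch b'' i k j m hik hjm hij (Ne.symm hmk) t
          -- decompose a and bstar by e0
          have ha2 : a = (fun e => a e - sgl e0 e) + sgl e0 := decomp_one a e0 hae0
          have hb2 : bstar = (fun e => bstar e - sgl e0 e) + sgl e0 := decomp_one bstar e0 hbse0
          set a1 : Dy n → ℕ := fun e => a e - sgl e0 e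
          set bs1 : Dy n → ℕ := fun e => bstar e - sgl e0 e
          have hsum : (∑ e : Dy n, a1 e) + 1 = N := by
            have h2 : ∑ e : Dy n, (a1 + sgl e0) e = (∑ e : Dy n, a1 e) + ∑ e : Dy n, sgl e0 e :=
              by simp only [Pi.add_apply]; exact Finset.sum_add_distrib
            rw [← ha2, hN, sum_sgl] at h2
            omega
          have hdeg1 : ∀ t, deg t a1 = deg t bs1 := by
            intro t
            have h1 := hdegbs t
            have h2 := deg_add t a1 (sgl e0)
            have h3 := deg_add t bs1 (sgl e0)
            rw [← ha2] at h2; rw [← hb2] at h3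
            omega
          have hmem := IH (N - 1) (by omega) a1 bs1 (by omega) hdeg1
          have hmem2 : M2 a - M2 bstar ∈ QI n := by
            rw [ha2, hb2, M2_add, M2_add, ← sub_mul]
            exact Ideal.mul_mem_right _ _ hmem
          have : M2 a - M2 b = (M2 a - M2 bstar) - (M2 b - M2 bstar) := by ring
          rw [this]
          exact Ideal.sub_mem _ hmem2 hQ1
        · -- good case: switch a using edges e0 = {i,j} and g = {k,l}
          have he0g : e0 ≠ g := by
            rw [← he0d, hg]
            exact dyad_ne i j k l hij hkl hik (Ne.symm hli)
          have hadec : a = (fun e => a e - sgl e0 e - sgl g e) + sgl (dyad i j hij)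
              + sgl (dyad k l hkl) := by
            rw [he0d, ← hg]
            exact decomp_two a e0 g hae0 hag he0g
          set a'' : Dy n → ℕ := fun e => a e - sgl e0 e - sgl g e
          have hjl : j ≠ l := fun h => hlj h.symm
          set astar : Dy n → ℕ := a'' + sgl (dyad i k hik) + sgl (dyad j l hjl)
          have hQ1 : M2 a - M2 astar ∈ QI n := by
            rw [hadec]
            exact switch_mem_QI a'' i j k l hij hkl hik hjl
          have hasf : 0 < astar f := by
            have : sgl (dyad i k hik) f = 1 := by rw [hf]; simp [sgl]
            simp only [astar, Pi.add_apply]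
            omega
          have hdegas : ∀ t, deg t astar = deg t b := by
            intro t
            rw [← hdeg t, hadec]
            exact (deg_switch a'' i j k l hij hkl hik hjl t).symm
          have hsumas : (∑ e : Dy n, astar e) = N := by
            have h2 := sum_switch a'' (dyad i k hik) (dyad j l hjl)
              (dyad i j hij) (dyad k l hkl)
            rw [← hadec] at h2
            rw [← hN]
            exact h2
          -- decompose astar and b by f
          have ha2 : astar = (fun e => astar e - sgl f e) + sgl f := decomp_one astar f hasf
          have hb2 : b = (fun e => b e - sgl f e) + sgl f := decomp_one b f hbf
          set as1 : Dy n → ℕ := fun e => astar e - sgl f e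
          set b1 : Dy n → ℕ := fun e => b e - sgl f e
          have hsum : (∑ e : Dy n, as1 e) + 1 = N := by
            have h2 : ∑ e : Dy n, (as1 + sgl f) e = (∑ e : Dy n, as1 e) + ∑ e : Dy n, sgl f e :=
              by simp only [Pi.add_apply]; exact Finset.sum_add_distrib
            rw [← ha2, hsumas, sum_sgl] at h2
            omega
          have hdeg1 : ∀ t, deg t as1 = deg t b1 := by
            intro t
            have h1 := hdegas t
            have h2 := deg_add t as1 (sgl f)
            have h3 := deg_add t b1 (sgl f)
            rw [← ha2] at h2; rw [← hb2] at h3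
            omega
          have hmem := IH (N - 1) (by omega) as1 b1 (by omega) hdeg1
          have hmem2 : M2 astar - M2 b ∈ QI n := by
            rw [ha2, hb2, M2_add, M2_add, ← sub_mul]
            exact Ideal.mul_mem_right _ _ hmem
          have : M2 a - M2 b = (M2 a - M2 astar) + (M2 astar - M2 b) := by ring
          rw [this]
          exact Ideal.add_mem _ hQ1 hmem2

end Key



section Bridge
variable {n : ℕ}

lemma AGv_col2 (r : Fin n ⊕ Fin n) (e : Dy n) : AGv n r (e, 2) = 0 := by
  rcases r with t | t <;> simp [AGv]

lemma AGv_eq_sub_l (t : Fin n) (c : Dy n × Fin 3) :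
    AGv n (Sum.inl t) c =
      Etilde n (Sum.inl t) c - Etilde n (Sum.inr (Sum.inr (Sum.inr t))) c := by
  rcases c with ⟨e, k⟩
  fin_cases k <;> simp [AGv, Etilde, aOf, bOf] <;> ring

lemma AGv_eq_sub_r (t : Fin n) (c : Dy n × Fin 3) :
    AGv n (Sum.inr t) c =
      Etilde n (Sum.inr (Sum.inl t)) c - Etilde n (Sum.inr (Sum.inr (Sum.inr t))) c := by
  rcases c with ⟨e, k⟩
  fin_cases k <;> simp [AGv, Etilde, aOf, bOf] <;> ring

lemma AGv_mulVec_of (u : Dy n × Fin 3 → ℤ) (hE : (Etilde n).mulVec u = 0) :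
    (AGv n).mulVec u = 0 := by
  funext r
  have h2 := congrFun hE (Sum.inr (Sum.inr (Sum.inr (r.elim id id))))
  have h1 := congrFun hE (r.elim Sum.inl (fun t => Sum.inr (Sum.inl t)))
  rcases r with t | t <;>
  · simp only [Matrix.mulVec, dotProduct, Pi.zero_apply, Sum.elim_inl,
      Sum.elim_inr, id] at h1 h2 ⊢
    rw [Finset.sum_congr rfl (fun c _ => by
      first
        | rw [AGv_eq_sub_l t c, sub_mul]
        | rw [AGv_eq_sub_r t c, sub_mul])]
    rw [Finset.sum_sub_distrib, h1, h2, sub_zero]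

def wtz (t : Fin n) (e : Dy n) : ℤ :=
  (if t = e.1.1 then 1 else 0) + (if t = e.1.2 then 1 else 0)

lemma rho_cond (u : Dy n × Fin 3 → ℤ) (hE : (Etilde n).mulVec u = 0) (t : Fin n) :
    ∑ e : Dy n, wtz t e * u (e, 2) = 0 := by
  have h := congrFun hE (Sum.inr (Sum.inr (Sum.inr t)))
  simp only [Matrix.mulVec, dotProduct, Pi.zero_apply] at h
  rw [Fintype.sum_prod_type] at h
  calc ∑ e : Dy n, wtz t e * u (e, 2)
      = ∑ e : Dy n, ∑ k : Fin 3, Etilde n (Sum.inr (Sum.inr (Sum.inr t))) (e, k) * u (e, k) := by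
        apply Finset.sum_congr rfl
        intro e _
        rw [Fin.sum_univ_three]
        simp [Etilde, aOf, bOf, wtz]
    _ = 0 := h

end Bridge


section Split
variable {n : ℕ}

lemma prod_split (v : Dy n × Fin 3 → ℤ) :
    (∏ c : Dy n × Fin 3, (X c : MvPolynomial (Dy n × Fin 3) ℚ) ^ (v c).toNat) =
      (∏ c : Dy n × Fin 3, X c ^ ((if c.2 = 2 then 0 else v c).toNat)) *
        M2 (fun e => (v (e, 2)).toNat) := by
  have h1 : ∀ c : Dy n × Fin 3, (v c).toNat =
      (if c.2 = 2 then 0 else v c).toNat + (if c.2 = 2 then v c else 0).toNat := by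
    intro c
    by_cases h : c.2 = 2 <;> simp [h]
  rw [Finset.prod_congr rfl (fun c _ => by rw [h1 c, pow_add]), Finset.prod_mul_distrib]
  congr 1
  rw [Fintype.prod_prod_type]
  unfold M2
  apply Finset.prod_congr rfl
  intro e _
  rw [Fin.prod_univ_three]
  rw [if_neg (show ¬((0:Fin 3) = 2) by decide), if_neg (show ¬((1:Fin 3) = 2) by decide),
    if_pos rfl]
  simp

lemma binom_split (u : Dy n × Fin 3 → ℤ) :
    binom u =
      M2 (fun e => (u (e, 2)).toNat) * binom (fun c => if c.2 = 2 then 0 else u c) +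
      (∏ c : Dy n × Fin 3, X c ^ ((-(if c.2 = 2 then 0 else u c)).toNat)) *
        (M2 (fun e => (u (e, 2)).toNat) - M2 (fun e => (-u (e, 2)).toNat)) := by
  have hp := prod_split u
  have hm := prod_split (fun c => -u c)
  have hmm : ∀ c : Dy n × Fin 3, (if c.2 = 2 then 0 else -u c) = -(if c.2 = 2 then 0 else u c) := by
    intro c; by_cases h : c.2 = 2 <;> simp [h]
  have hre : (∏ c : Dy n × Fin 3,
        (X c : MvPolynomial (Dy n × Fin 3) ℚ) ^ (if c.2 = 2 then 0 else -u c).toNat) =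
      ∏ c : Dy n × Fin 3, X c ^ ((-(if c.2 = 2 then 0 else u c)).toNat) :=
    Finset.prod_congr rfl (fun c _ => by rw [hmm c])
  rw [hre] at hm
  unfold binom
  rw [hp, hm]
  ring

lemma deg_cast (t : Fin n) (a : Dy n → ℕ) :
    ((deg t a : ℕ) : ℤ) = ∑ e : Dy n, wtz t e * (a e : ℤ) := by
  unfold deg
  push_cast
  apply Finset.sum_congr rfl
  intro e _
  unfold wt wtz
  push_cast
  ring

lemma deg_eq_of_rho (z : Dy n → ℤ) (h : ∀ t, ∑ e : Dy n, wtz t e * z e = 0) (t : Fin n) :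
    deg t (fun e => (z e).toNat) = deg t (fun e => (-z e).toNat) := by
  have hz : ∀ e : Dy n, ((z e).toNat : ℤ) - ((-z e).toNat : ℤ) = z e := by
    intro e; omega
  have hc : ((deg t (fun e => (z e).toNat) : ℕ) : ℤ) =
      ((deg t (fun e => (-z e).toNat) : ℕ) : ℤ) := by
    rw [deg_cast, deg_cast, ← sub_eq_zero, ← Finset.sum_sub_distrib, ← h t]
    apply Finset.sum_congr rfl
    intro e _
    rw [← mul_sub, hz e]
  exact_mod_cast hc

end Split


section Incl
variable {n : ℕ}

noncomputable def I1 (n : ℕ) : Ideal (MvPolynomial (Dy n × Fin 3) ℚ) :=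
  Ideal.span {f | ∃ u : Dy n × Fin 3 → ℤ,
      (AGv n).mulVec u = 0 ∧ (∀ e : Dy n, u (e, 2) = 0) ∧ f = binom u}

lemma toric_le_sup : toricIdeal (Etilde n) ≤ I1 n ⊔ QI n := by
  apply Ideal.span_le.mpr
  rintro f ⟨u, hE, rfl⟩
  have hA := AGv_mulVec_of u hE
  rw [SetLike.mem_coe, binom_split u]
  apply Ideal.add_mem
  · apply Ideal.mem_sup_left
    apply Ideal.mul_mem_left
    apply Ideal.subset_span
    refine ⟨fun c => if c.2 = 2 then 0 else u c, ?_, fun e => if_pos rfl, rfl⟩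
    funext r
    have hr := congrFun hA r
    simp only [Matrix.mulVec, dotProduct, Pi.zero_apply] at hr ⊢
    rw [← hr]
    apply Finset.sum_congr rfl
    rintro ⟨e, k⟩ _
    fin_cases k <;> simp [AGv_col2]
  · apply Ideal.mem_sup_right
    apply Ideal.mul_mem_left
    exact key _ (fun e => (u (e, 2)).toNat) (fun e => (-u (e, 2)).toNat) rfl
      (deg_eq_of_rho (fun e => u (e, 2)) (rho_cond u hE))

lemma I1_le_toric : I1 n ≤ toricIdeal (Etilde n) := by
  apply Ideal.span_le.mpr
  rintro f ⟨u, hA, h2, rfl⟩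
  apply Ideal.subset_span
  refine ⟨u, ?_, rfl⟩
  funext r
  simp only [Matrix.mulVec, dotProduct, Pi.zero_apply]
  rcases r with t | t | s | t
  · have hr := congrFun hA (Sum.inl t)
    simp only [Matrix.mulVec, dotProduct, Pi.zero_apply] at hr
    rw [Finset.sum_congr rfl (fun c _ => show Etilde n (Sum.inl t) c * u c
        = AGv n (Sum.inl t) c * u c from ?_), hr]
    rcases c with ⟨e, k⟩
    rcases (show k = 0 ∨ k = 1 ∨ k = 2 from by omega) with rfl | rfl | rfl
    · congr 1
      simp [Etilde, AGv, aOf, bOf]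
    · congr 1
      simp [Etilde, AGv, aOf, bOf]
    · rw [h2 e, mul_zero, mul_zero]
  · have hr := congrFun hA (Sum.inr t)
    simp only [Matrix.mulVec, dotProduct, Pi.zero_apply] at hr
    rw [Finset.sum_congr rfl (fun c _ => show Etilde n (Sum.inr (Sum.inl t)) c * u c
        = AGv n (Sum.inr t) c * u c from ?_), hr]
    rcases c with ⟨e, k⟩
    rcases (show k = 0 ∨ k = 1 ∨ k = 2 from by omega) with rfl | rfl | rfl
    · congr 1
      simp [Etilde, AGv, aOf, bOf]
    · congr 1
      simp [Etilde, AGv, aOf, bOf]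
    · rw [h2 e, mul_zero, mul_zero]
  · rcases (show s = 0 ∨ s = 1 from by omega) with rfl | rfl
    · -- θ row
      have hθ : ∀ c : Dy n × Fin 3, Etilde n (Sum.inr (Sum.inr (Sum.inl 0))) c * u c
          = ∑ t : Fin n, AGv n (Sum.inl t) c * u c := by
        rintro ⟨e, k⟩
        rcases (show k = 0 ∨ k = 1 ∨ k = 2 from by omega) with rfl | rfl | rfl
        · rw [← Finset.sum_mul]
          congr 1
          simp [Etilde, AGv, aOf, bOf, Finset.sum_ite_eq']
        · rw [← Finset.sum_mul]
          congr 1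
          simp [Etilde, AGv, aOf, bOf, Finset.sum_ite_eq']
        · rw [h2 e]
          simp
      rw [Finset.sum_congr rfl (fun c _ => hθ c), Finset.sum_comm]
      apply Finset.sum_eq_zero
      intro t _
      have hr := congrFun hA (Sum.inl t)
      simp only [Matrix.mulVec, dotProduct, Pi.zero_apply] at hr
      exact hr
    · -- ρ row
      apply Finset.sum_eq_zero
      rintro ⟨e, k⟩ _
      rcases (show k = 0 ∨ k = 1 ∨ k = 2 from by omega) with rfl | rfl | rfl
      · simp [Etilde, aOf, bOf]
      · simp [Etilde, aOf, bOf]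
      · rw [h2 e, mul_zero]
  · -- ρ_t rows
    apply Finset.sum_eq_zero
    rintro ⟨e, k⟩ _
    rcases (show k = 0 ∨ k = 1 ∨ k = 2 from by omega) with rfl | rfl | rfl
    · simp [Etilde, aOf, bOf]
    · simp [Etilde, aOf, bOf]
    · rw [h2 e, mul_zero]

lemma sum_mul_ind (f : Dy n × Fin 3 → ℤ) (c0 : Dy n × Fin 3) :
    ∑ c : Dy n × Fin 3, f c * (if c = c0 then 1 else 0) = f c0 := by
  rw [Finset.sum_eq_single c0]
  · simp
  · intro b _ hb; simp [hb]
  · intro h; exact absurd (Finset.mem_univ c0) h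

lemma prodX_sgl (c0 : Dy n × Fin 3) :
    ∏ c : Dy n × Fin 3, (X c : MvPolynomial (Dy n × Fin 3) ℚ) ^ (if c = c0 then 1 else 0) =
      X c0 := by
  rw [Finset.prod_eq_single c0]
  · simp
  · intro b _ hb; simp [hb]
  · intro h; exact absurd (Finset.mem_univ c0) h

lemma prodX_two (c1 c2 : Dy n × Fin 3) :
    ∏ c : Dy n × Fin 3, (X c : MvPolynomial (Dy n × Fin 3) ℚ) ^
        ((if c = c1 then 1 else 0) + (if c = c2 then 1 else 0) : ℕ) = X c1 * X c2 := by
  rw [Finset.prod_congr rfl (fun c _ => pow_add (X c : MvPolynomial (Dy n × Fin 3) ℚ)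
    (if c = c1 then 1 else 0) (if c = c2 then 1 else 0)), Finset.prod_mul_distrib,
    prodX_sgl, prodX_sgl]

lemma E2_alpha (t a b : Fin n) (h : a ≠ b) :
    Etilde n (Sum.inl t) (dyad a b h, 2) = (if t = a then 1 else 0) + (if t = b then 1 else 0) := by
  unfold dyad
  by_cases hab : a < b
  · erw [dif_pos hab]; simp [Etilde, aOf, bOf]
  · erw [dif_neg hab]; simp [Etilde, aOf, bOf]; ring

lemma E2_beta (t a b : Fin n) (h : a ≠ b) :
    Etilde n (Sum.inr (Sum.inl t)) (dyad a b h, 2) =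
      (if t = a then 1 else 0) + (if t = b then 1 else 0) := by
  unfold dyad
  by_cases hab : a < b
  · erw [dif_pos hab]; simp [Etilde, aOf, bOf] <;> ring
  · erw [dif_neg hab]; simp [Etilde, aOf, bOf] <;> ring

lemma E2_theta (s : Fin 2) (a b : Fin n) (h : a ≠ b) :
    Etilde n (Sum.inr (Sum.inr (Sum.inl s))) (dyad a b h, 2) = if s = 0 then 2 else 1 := by
  unfold dyad
  by_cases hab : a < b
  · erw [dif_pos hab]; by_cases hs : s = 0 <;> simp [Etilde, aOf, bOf, hs]
  · erw [dif_neg hab]; by_cases hs : s = 0 <;> simp [Etilde, aOf, bOf, hs]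

lemma E2_rho (t a b : Fin n) (h : a ≠ b) :
    Etilde n (Sum.inr (Sum.inr (Sum.inr t))) (dyad a b h, 2) =
      (if t = a then 1 else 0) + (if t = b then 1 else 0) := by
  unfold dyad
  by_cases hab : a < b
  · erw [dif_pos hab]; simp [Etilde, aOf, bOf]
  · erw [dif_neg hab]; simp [Etilde, aOf, bOf]; ring

lemma QI_le_toric : QI n ≤ toricIdeal (Etilde n) := by
  apply Ideal.span_le.mpr
  rintro f ⟨i, j, k, l, hij, hkl, hik, hjl, rfl⟩
  by_cases hjk : j = k
  · subst hjk
    have h0 : (X (dyad i j hij, (2 : Fin 3)) * X (dyad j l hkl, (2 : Fin 3)) :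
        MvPolynomial (Dy n × Fin 3) ℚ) -
        X (dyad i j hik, (2 : Fin 3)) * X (dyad j l hjl, (2 : Fin 3)) = 0 :=
      sub_eq_zero_of_eq rfl
    rw [SetLike.mem_coe, h0]
    exact Ideal.zero_mem _
  · by_cases hil : i = l
    · subst hil
      have e1 : dyad k i hkl = dyad i k hik := by rw [dyad_comm]
      have e2 : dyad j i hjl = dyad i j hij := by rw [dyad_comm]
      rw [SetLike.mem_coe, e1, e2, mul_comm, sub_self]
      exact Ideal.zero_mem _
    · -- all distinct
      set c1 : Dy n × Fin 3 := (dyad i j hij, 2) with hc1def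
      set c2 : Dy n × Fin 3 := (dyad k l hkl, 2) with hc2def
      set c3 : Dy n × Fin 3 := (dyad i k hik, 2) with hc3def
      set c4 : Dy n × Fin 3 := (dyad j l hjl, 2) with hc4def
      have d12 : dyad i j hij ≠ dyad k l hkl := dyad_ne i j k l hij hkl hik hil
      have d13 : dyad i j hij ≠ dyad i k hik := by
        rw [dyad_comm i j hij]
        exact dyad_ne j i i k hij.symm hik hij.symm hjk
      have d14 : dyad i j hij ≠ dyad j l hjl := dyad_ne i j j l hij hjl hij hil
      have d23 : dyad k l hkl ≠ dyad i k hik := by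
        rw [dyad_comm k l hkl]
        exact dyad_ne l k i k hkl.symm hik (fun h => hil h.symm) hkl.symm
      have d24 : dyad k l hkl ≠ dyad j l hjl :=
        dyad_ne k l j l hkl hjl (fun h => hjk h.symm) hkl
      have d34 : dyad i k hik ≠ dyad j l hjl := dyad_ne i k j l hik hjl hij hil
      have hc12 : c1 ≠ c2 := fun h => d12 (Prod.ext_iff.mp h).1
      have hc13 : c1 ≠ c3 := fun h => d13 (Prod.ext_iff.mp h).1
      have hc14 : c1 ≠ c4 := fun h => d14 (Prod.ext_iff.mp h).1
      have hc23 : c2 ≠ c3 := fun h => d23 (Prod.ext_iff.mp h).1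
      have hc24 : c2 ≠ c4 := fun h => d24 (Prod.ext_iff.mp h).1
      have hc34 : c3 ≠ c4 := fun h => d34 (Prod.ext_iff.mp h).1
      set u : Dy n × Fin 3 → ℤ := fun c => (if c = c1 then 1 else 0) + (if c = c2 then 1 else 0)
        - (if c = c3 then 1 else 0) - (if c = c4 then 1 else 0) with hudef
      have hp : ∀ c, (u c).toNat = ((if c = c1 then 1 else 0) + (if c = c2 then 1 else 0) : ℕ) := by
        intro c
        rw [hudef]
        by_cases h1 : c = c1
        · subst h1; simp [hc12, hc13, hc14]
        · by_cases h2 : c = c2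
          · subst h2; simp [hc12.symm, hc23, hc24]
          · by_cases h3 : c = c3
            · subst h3; simp [hc13.symm, hc23.symm, hc34, h1, h2]
            · by_cases h4 : c = c4
              · subst h4; simp [hc14.symm, hc24.symm, hc34.symm, h1, h2]
              · simp [h1, h2, h3, h4]
      have hq : ∀ c, (-u c).toNat = ((if c = c3 then 1 else 0) + (if c = c4 then 1 else 0) : ℕ) := by
        intro c
        rw [hudef]
        by_cases h1 : c = c1
        · subst h1; simp [hc12, hc13, hc14]
        · by_cases h2 : c = c2
          · subst h2; simp [hc12.symm, hc23, hc24]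
          · by_cases h3 : c = c3
            · subst h3; simp [hc13.symm, hc23.symm, hc34, h1, h2]
            · by_cases h4 : c = c4
              · subst h4; simp [hc14.symm, hc24.symm, hc34.symm, h1, h2]
              · simp [h1, h2, h3, h4]
      apply Ideal.subset_span
      refine ⟨u, ?_, ?_⟩
      · funext r
        simp only [Matrix.mulVec, dotProduct, Pi.zero_apply]
        have hexp : ∀ c' : Dy n × Fin 3, Etilde n r c' * u c' =
            Etilde n r c' * (if c' = c1 then 1 else 0) + Etilde n r c' * (if c' = c2 then 1 else 0)
            - Etilde n r c' * (if c' = c3 then 1 else 0)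
            - Etilde n r c' * (if c' = c4 then 1 else 0) := by
          intro c'
          rw [hudef]
          ring
        rw [Finset.sum_congr rfl (fun c' _ => hexp c'), Finset.sum_sub_distrib,
          Finset.sum_sub_distrib, Finset.sum_add_distrib, sum_mul_ind, sum_mul_ind,
          sum_mul_ind, sum_mul_ind, hc1def, hc2def, hc3def, hc4def]
        rcases r with t | t | s | t
        · rw [E2_alpha, E2_alpha, E2_alpha, E2_alpha]
          ring
        · rw [E2_beta, E2_beta, E2_beta, E2_beta]
          ring
        · rw [E2_theta, E2_theta, E2_theta, E2_theta]
          ring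
        · rw [E2_rho, E2_rho, E2_rho, E2_rho]
          ring
      · have h1 : (∏ c : Dy n × Fin 3, (X c : MvPolynomial (Dy n × Fin 3) ℚ) ^ (u c).toNat)
            = X c1 * X c2 := by
          rw [← prodX_two c1 c2]
          exact Finset.prod_congr rfl (fun c _ => by rw [hp c])
        have h2 : (∏ c : Dy n × Fin 3, (X c : MvPolynomial (Dy n × Fin 3) ℚ) ^ (-u c).toNat)
            = X c3 * X c4 := by
          rw [← prodX_two c3 c4]
          exact Finset.prod_congr rfl (fun c _ => by rw [hq c])
        unfold binom
        rw [h1, h2]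

end Incl



/-- Decomposition I_{Ẽₙ} = I_{Aₙ} + Q for n ≥ 4: the toric ideal of the simplified
edge-dependent-reciprocation model is the sum of the toric ideal of the incidence
matrix of Gₙ (in the variables p_{ij}(1,0), p_{ij}(0,1)) and the ideal Q generated by
the quadrics p_{ij}(1,1)·p_{kl}(1,1) − p_{ik}(1,1)·p_{jl}(1,1). -/
theorem stmt8 (n : ℕ) (hn : 4 ≤ n) :
    toricIdeal (Etilde n) =
      Ideal.span {f | ∃ u : Dy n × Fin 3 → ℤ,
          (AGv n).mulVec u = 0 ∧ (∀ e : Dy n, u (e, 2) = 0) ∧ f = binom u} ⊔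
      Ideal.span {f | ∃ (i j k l : Fin n) (hij : i ≠ j) (hkl : k ≠ l)
          (hik : i ≠ k) (hjl : j ≠ l),
          f = X (dyad i j hij, (2 : Fin 3)) * X (dyad k l hkl, (2 : Fin 3)) -
              X (dyad i k hik, (2 : Fin 3)) * X (dyad j l hjl, (2 : Fin 3))} := by
  show toricIdeal (Etilde n) = I1 n ⊔ QI n
  exact le_antisymm toric_le_sup (sup_le I1_le_toric QI_le_toric)
end

section
/- Let P₁, …, P_k be polytopes in ℝ^d and P = P₁ + ⋯ + P_k their Minkowski sum. A nonempty subset F of P is a face of P if and only if F = F₁ + ⋯ + F_k where there exists c ∈ ℝ^d with F_i = S(P_i; c) := argmax_{x ∈ P_i} ⟨c, x⟩ for all i. Moreover, the decomposition F = F₁ + ⋯ + F_k of any nonempty face F is unique. -/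
open Pointwise

/-- S(P; c): the set of maximizers of the linear functional x ↦ ⟨c, x⟩ over P. -/
def smax {d : ℕ} (P : Set (Fin d → ℝ)) (c : Fin d → ℝ) : Set (Fin d → ℝ) :=
  {x ∈ P | ∀ y ∈ P, ∑ t, c t * y t ≤ ∑ t, c t * x t}

private lemma Ladd {d : ℕ} (c a b : Fin d → ℝ) :
    (∑ t, c t * (a + b) t) = (∑ t, c t * a t) + (∑ t, c t * b t) := by
  simp [mul_add, Finset.sum_add_distrib]

private lemma Lsum {d k : ℕ} (c : Fin d → ℝ) (g : Fin k → (Fin d → ℝ)) :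
    (∑ t, c t * (∑ i, g i) t) = ∑ i, ∑ t, c t * g i t := by
  rw [Finset.sum_comm]
  congr 1
  ext t
  rw [Finset.sum_apply, Finset.mul_sum]

/-- Key lemma: the face of a Minkowski sum is the sum of the faces. -/
lemma smax_sum {d k : ℕ} (A : Fin k → Set (Fin d → ℝ)) (c : Fin d → ℝ) :
    smax (∑ i, A i) c = ∑ i, smax (A i) c := by
  ext z
  constructor
  · rintro ⟨hz, hmax⟩
    obtain ⟨g, hg, hsum⟩ := (Set.mem_fintype_sum _ z).1 hz
    refine (Set.mem_fintype_sum _ z).2 ⟨g, fun i => ⟨hg i, fun y hy => ?_⟩, hsum⟩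
    have h1 : (∑ j, Function.update g i y j) ∈ ∑ j, A j := by
      refine (Set.mem_fintype_sum _ _).2 ⟨Function.update g i y, fun j => ?_, rfl⟩
      rcases eq_or_ne j i with rfl | hj
      · simpa using hy
      · rw [Function.update_of_ne hj]; exact hg j
    have h2 := hmax _ h1
    rw [Lsum, ← hsum, Lsum] at h2
    rw [← Finset.add_sum_erase _ _ (Finset.mem_univ i)] at h2
    rw [← Finset.add_sum_erase _ (fun j => ∑ t, c t * g j t) (Finset.mem_univ i)] at h2
    rw [Function.update_self] at h2
    have h3 : ∑ j ∈ Finset.univ.erase i, ∑ t, c t * Function.update g i y j t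
        = ∑ j ∈ Finset.univ.erase i, ∑ t, c t * g j t := by
      refine Finset.sum_congr rfl fun j hj => ?_
      rw [Function.update_of_ne (Finset.ne_of_mem_erase hj)]
    rw [h3] at h2
    linarith
  · intro hz
    obtain ⟨g, hg, hsum⟩ := (Set.mem_fintype_sum _ z).1 hz
    have hzA : z ∈ ∑ i, A i :=
      (Set.mem_fintype_sum _ z).2 ⟨g, fun i => (hg i).1, hsum⟩
    refine ⟨hzA, fun y hy => ?_⟩
    obtain ⟨g', hg', hsum'⟩ := (Set.mem_fintype_sum _ y).1 hy
    rw [← hsum, ← hsum', Lsum, Lsum]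
    exact Finset.sum_le_sum fun i _ => (hg i).2 (g' i) (hg' i)

/-- Uniqueness (one inclusion). -/
lemma smax_uniq {d k : ℕ} (A : Fin k → Set (Fin d → ℝ)) (c c' : Fin d → ℝ)
    (h : (∑ i, smax (A i) c) = ∑ i, smax (A i) c')
    (hne : (∑ i, smax (A i) c).Nonempty) :
    ∀ i, smax (A i) c ⊆ smax (A i) c' := by
  obtain ⟨z, hz⟩ := hne
  obtain ⟨f, hf, hfsum⟩ := (Set.mem_fintype_sum _ z).1 hz
  obtain ⟨g, hg, hgsum⟩ := (Set.mem_fintype_sum _ z).1 (h ▸ hz)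
  -- each f i maximizes c' over A i
  have hle : ∀ i ∈ Finset.univ, (∑ t, c' t * f i t) ≤ ∑ t, c' t * g i t :=
    fun i _ => (hg i).2 (f i) (hf i).1
  have heq : (∑ i, ∑ t, c' t * f i t) = ∑ i, ∑ t, c' t * g i t := by
    rw [← Lsum, ← Lsum, hfsum, hgsum]
  have hkey : ∀ i, (∑ t, c' t * f i t) = ∑ t, c' t * g i t :=
    fun i => (Finset.sum_eq_sum_iff_of_le hle).1 heq i (Finset.mem_univ i)
  have hfmax : ∀ i, f i ∈ smax (A i) c' := fun i =>
    ⟨(hf i).1, fun y hy => (hkey i) ▸ (hg i).2 y hy⟩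
  intro i x hx
  -- p = x + ∑_{j ≠ i} f j belongs to the common face
  set p : Fin d → ℝ := ∑ j, Function.update f i x j with hp
  have hpF : p ∈ ∑ j, smax (A j) c := by
    refine (Set.mem_fintype_sum _ _).2 ⟨Function.update f i x, fun j => ?_, rfl⟩
    rcases eq_or_ne j i with rfl | hj
    · simpa using hx
    · rw [Function.update_of_ne hj]; exact hf j
  -- both p and z are in smax (∑ A) c'
  have hface : (∑ j, smax (A j) c) = smax (∑ j, A j) c' := by
    rw [h, smax_sum]
  have hp' : p ∈ smax (∑ j, A j) c' := hface ▸ hpF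
  have hz' : z ∈ smax (∑ j, A j) c' := hface ▸ hz
  have hpz : (∑ t, c' t * p t) = ∑ t, c' t * z t :=
    le_antisymm (hz'.2 p hp'.1) (hp'.2 z hz'.1)
  -- expand both sides
  have hexp : (∑ t, c' t * p t)
      = (∑ t, c' t * x t) + ∑ j ∈ Finset.univ.erase i, ∑ t, c' t * f j t := by
    rw [hp, Lsum, ← Finset.add_sum_erase _ _ (Finset.mem_univ i), Function.update_self]
    congr 1
    refine Finset.sum_congr rfl fun j hj => ?_
    rw [Function.update_of_ne (Finset.ne_of_mem_erase hj)]
  have hzexp : (∑ t, c' t * z t)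
      = (∑ t, c' t * f i t) + ∑ j ∈ Finset.univ.erase i, ∑ t, c' t * f j t := by
    rw [← hfsum, Lsum, ← Finset.add_sum_erase _ _ (Finset.mem_univ i)]
  have hxfi : (∑ t, c' t * x t) = ∑ t, c' t * f i t := by
    rw [hexp, hzexp] at hpz; linarith
  exact ⟨hx.1, fun y hy => hxfi ▸ (hfmax i).2 y hy⟩

/-- Gritzmann–Sturmfels: for polytopes P₁, …, P_k with Minkowski sum P, a nonempty
subset F of P is a face of P iff F = F₁ + ⋯ + F_k where F_i = S(P_i; c) for a common
c; moreover this decomposition of a nonempty face is unique. -/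
theorem stmt11 (d k : ℕ) (P : Fin k → Set (Fin d → ℝ))
    (hP : ∀ i, ∃ S : Finset (Fin d → ℝ), P i = convexHull ℝ (S : Set (Fin d → ℝ)))
    (F : Set (Fin d → ℝ)) (hne : F.Nonempty) (hsub : F ⊆ ∑ i, P i) :
    ((∃ c, F = smax (∑ i, P i) c) ↔ ∃ c, F = ∑ i, smax (P i) c) ∧
    (∀ c c', F = ∑ i, smax (P i) c → F = ∑ i, smax (P i) c' →
      ∀ i, smax (P i) c = smax (P i) c') := by
  constructor
  · exact ⟨fun ⟨c, hc⟩ => ⟨c, hc.trans (smax_sum P c)⟩,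
      fun ⟨c, hc⟩ => ⟨c, hc.trans (smax_sum P c).symm⟩⟩
  · intro c c' h1 h2 i
    have h : (∑ i, smax (P i) c) = ∑ i, smax (P i) c' := h1.symm.trans h2
    have hne1 : (∑ i, smax (P i) c).Nonempty := h1 ▸ hne
    have hne2 : (∑ i, smax (P i) c').Nonempty := h2 ▸ hne
    exact le_antisymm (smax_uniq P c c' h hne1 i) (smax_uniq P c' c h.symm hne2 i)
end

section
/- With A the p₁ design matrix (containing the λ_{ij} rows), P_A = {Ap : p ∈ Dₙ} the marginal polytope, and C_A = cone(A) the cone generated by the columns of A: for t ∈ P_A, t lies in the relative interior of P_A if and only if t lies in the relative interior of C_A. -/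
open Set

/-- Membership in the intrinsic interior via an ambient open set. -/
lemma memII_aux {E : Type*} [NormedAddCommGroup E] [NormedSpace ℝ E] (s : Set E) (x : E) :
    x ∈ intrinsicInterior ℝ s ↔
      x ∈ affineSpan ℝ s ∧
        ∃ U : Set E, IsOpen U ∧ x ∈ U ∧ U ∩ (affineSpan ℝ s : Set E) ⊆ s := by
  constructor
  · rintro ⟨y, hy, rfl⟩
    obtain ⟨O, hOsub, hOopen, hyO⟩ := mem_interior.mp hy
    obtain ⟨U, hU, rfl⟩ := isOpen_induced_iff.mp hOopen
    refine ⟨y.2, U, hU, hyO, ?_⟩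
    rintro z ⟨hzU, hz⟩
    exact hOsub (show (⟨z, hz⟩ : affineSpan ℝ s) ∈ _ from hzU)
  · rintro ⟨hx, U, hU, hxU, hsub⟩
    refine ⟨⟨x, hx⟩, ?_, rfl⟩
    exact mem_interior.mpr ⟨Subtype.val ⁻¹' U, fun z hz => hsub ⟨hz, z.2⟩,
      hU.preimage continuous_subtype_val, hxU⟩

/-- With A the p₁ design matrix (with the λ_{ij} rows, and affinely independent
columns within each dyad block), P_A = {Ap : p ∈ Dₙ} the marginal polytope and
C_A = cone(A): for t ∈ P_A, t lies in the relative interior of P_A iff t lies in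
the relative interior of C_A. -/
theorem stmt13 (ι R : Type) [Fintype ι] [Fintype R] [DecidableEq ι]
    (A : Matrix (ι ⊕ R) (ι × Fin 4) ℝ)
    (hlam : ∀ (e : ι) (c : ι × Fin 4), A (Sum.inl e) c = if c.1 = e then 1 else 0)
    (haff : ∀ e : ι,
      AffineIndependent ℝ (fun k : Fin 4 => (fun r => A r (e, k) : (ι ⊕ R) → ℝ)))
    (t : (ι ⊕ R) → ℝ)
    (ht : t ∈ (fun p => A.mulVec p) ''
        {p : ι × Fin 4 → ℝ | (∀ c, 0 ≤ p c) ∧ ∀ e : ι, ∑ k : Fin 4, p (e, k) = 1}) :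
    t ∈ intrinsicInterior ℝ ((fun p => A.mulVec p) ''
          {p : ι × Fin 4 → ℝ | (∀ c, 0 ≤ p c) ∧ ∀ e : ι, ∑ k : Fin 4, p (e, k) = 1}) ↔
      t ∈ intrinsicInterior ℝ
          {s : (ι ⊕ R) → ℝ | ∃ y : ι × Fin 4 → ℝ, (∀ c, 0 ≤ y c) ∧ s = A.mulVec y} := by
  classical
  set Dset : Set (ι × Fin 4 → ℝ) :=
    {p | (∀ c, 0 ≤ p c) ∧ ∀ e : ι, ∑ k : Fin 4, p (e, k) = 1} with hDset
  set Pset : Set ((ι ⊕ R) → ℝ) := (fun p => A.mulVec p) '' Dset with hPset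
  set Cset : Set ((ι ⊕ R) → ℝ) :=
    {s | ∃ y : ι × Fin 4 → ℝ, (∀ c, 0 ≤ y c) ∧ s = A.mulVec y} with hCset
  -- the λ-row computation
  have hrow : ∀ (y : ι × Fin 4 → ℝ) (e : ι),
      A.mulVec y (Sum.inl e) = ∑ k : Fin 4, y (e, k) := by
    intro y e
    simp only [Matrix.mulVec, dotProduct, hlam]
    rw [Fintype.sum_prod_type]
    simp [Finset.sum_ite_eq']
  obtain ⟨p₀, hp₀, ht0⟩ := ht
  have htP : t ∈ Pset := ⟨p₀, hp₀, ht0⟩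
  have htC : t ∈ Cset := ⟨p₀, hp₀.1, ht0.symm⟩
  have hPC : Pset ⊆ Cset := by
    rintro x ⟨p, hp, rfl⟩
    exact ⟨p, hp.1, rfl⟩
  -- every point of the affine span of Pset has λ-coordinates 1
  have hspanP : ∀ x ∈ affineSpan ℝ Pset, ∀ e, x (Sum.inl e) = 1 := by
    intro x hx e
    refine affineSpan_induction (p := fun x => x (Sum.inl e) = 1) hx ?_ ?_
    · rintro z ⟨q, hq, rfl⟩
      show A.mulVec q (Sum.inl e) = 1
      rw [hrow]; exact hq.2 e
    · intro c u v w hu hv hw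
      simp only [vsub_eq_sub, vadd_eq_add, Pi.add_apply, Pi.smul_apply, Pi.sub_apply,
        hu, hv, hw, smul_eq_mul]
      ring
  have hCapP : Cset ∩ (affineSpan ℝ Pset : Set _) ⊆ Pset := by
    rintro x ⟨⟨y, hy, rfl⟩, hx⟩
    exact ⟨y, ⟨hy, fun e => (hrow y e).symm.trans (hspanP _ hx e)⟩, rfl⟩
  set V : Submodule ℝ ((ι ⊕ R) → ℝ) := LinearMap.range (Matrix.mulVecLin A) with hV
  have hCV : Cset ⊆ (V : Set ((ι ⊕ R) → ℝ)) := by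
    rintro x ⟨y, hy, rfl⟩
    exact ⟨y, by simp [Matrix.mulVecLin_apply]⟩
  have hspanC : (affineSpan ℝ Cset : Set _) ⊆ (V : Set ((ι ⊕ R) → ℝ)) := by
    intro x hx
    refine affineSpan_induction (p := fun x => x ∈ V) hx (fun z hz => hCV hz) ?_
    intro c u v w hu hv hw
    simpa [vsub_eq_sub, vadd_eq_add] using V.add_mem (V.smul_mem c (V.sub_mem hu hv)) hw
  constructor
  · -- ri P → ri C
    intro h
    obtain ⟨hsp, U, hU, htU, hsub⟩ := (memII_aux Pset t).mp h
    -- barycenter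
    set pbar : ι × Fin 4 → ℝ := fun _ => (4 : ℝ)⁻¹ with hpbar
    have hbD : pbar ∈ Dset := ⟨fun c => by norm_num, fun e => by norm_num⟩
    set b : (ι ⊕ R) → ℝ := A.mulVec pbar with hb
    have hbP : b ∈ Pset := ⟨pbar, hbD, rfl⟩
    have hcont : Filter.Tendsto (fun ε : ℝ => ε • (t - b) + t) (nhds 0) (nhds t) := by
      have hc : Continuous fun ε : ℝ => ε • (t - b) + t :=
        (continuous_id.smul continuous_const).add continuous_const
      simpa using hc.tendsto 0
    have hev : ∀ᶠ ε in nhdsWithin (0 : ℝ) (Set.Ioi 0), ε • (t - b) + t ∈ U :=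
      (hcont.mono_left nhdsWithin_le_nhds).eventually (hU.mem_nhds htU)
    obtain ⟨ε, hεU, hεpos⟩ := (hev.and self_mem_nhdsWithin).exists
    have hzspan : ε • (t - b) + t ∈ affineSpan ℝ Pset := by
      have := AffineSubspace.smul_vsub_vadd_mem (affineSpan ℝ Pset) ε
        (subset_affineSpan ℝ Pset htP) (subset_affineSpan ℝ Pset hbP) hsp
      simpa [vsub_eq_sub, vadd_eq_add] using this
    have hzP : ε • (t - b) + t ∈ Pset := hsub ⟨hεU, hzspan⟩
    obtain ⟨q, ⟨hq0, hq1⟩, hqz⟩ := hzP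
    have hε1 : (0 : ℝ) < 1 + ε := by linarith
    set p : ι × Fin 4 → ℝ := fun c => (q c + ε * (4 : ℝ)⁻¹) / (1 + ε) with hp
    have hppos : ∀ c, 0 < p c := by
      intro c
      have := hq0 c
      exact div_pos (by positivity) hε1
    have hAp : A.mulVec p = t := by
      have hpe : p = (1 + ε)⁻¹ • (q + ε • pbar) := by
        funext c
        simp only [hp, hpbar, Pi.smul_apply, Pi.add_apply, smul_eq_mul, div_eq_inv_mul]
        try ring
      have h1 : A.mulVec p = (1 + ε)⁻¹ • (A.mulVec q + ε • A.mulVec pbar) := by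
        rw [hpe]
        simp only [← Matrix.mulVecLin_apply, map_smul, map_add]
      have hqz' : A.mulVec q = ε • (t - b) + t := hqz
      rw [h1, hqz', ← hb]
      have h2 : (ε • (t - b) + t) + ε • b = (1 + ε) • t := by module
      rw [h2, smul_smul, inv_mul_cancel₀ hε1.ne', one_smul]
    -- openness of the strictly positive image
    let f : ((ι × Fin 4) → ℝ) →L[ℝ] V :=
      LinearMap.toContinuousLinearMap ((Matrix.mulVecLin A).rangeRestrict)
    have hfsurj : Function.Surjective f := (Matrix.mulVecLin A).surjective_rangeRestrict
    have hfopen : IsOpenMap f := f.isOpenMap hfsurj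
    have hOopen : IsOpen {y : ι × Fin 4 → ℝ | ∀ c, 0 < y c} := by
      have he : {y : ι × Fin 4 → ℝ | ∀ c, 0 < y c}
          = ⋂ c, (fun y : ι × Fin 4 → ℝ => y c) ⁻¹' Set.Ioi 0 := by
        ext y; simp
      rw [he]
      exact isOpen_iInter_of_finite fun c => isOpen_Ioi.preimage (continuous_apply c)
    have hW := hfopen _ hOopen
    obtain ⟨U', hU', hU'eq⟩ := isOpen_induced_iff.mp hW
    refine (memII_aux Cset t).mpr ⟨subset_affineSpan ℝ Cset htC, U', hU', ?_, ?_⟩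
    · have htV : t ∈ V := ⟨p, by simp [Matrix.mulVecLin_apply, hAp]⟩
      have hmem : (⟨t, htV⟩ : V) ∈ f '' {y | ∀ c, 0 < y c} := by
        refine ⟨p, hppos, ?_⟩
        apply Subtype.ext
        simp [f, Matrix.mulVecLin_apply, hAp, LinearMap.rangeRestrict]
      rw [← hU'eq] at hmem
      exact hmem
    · rintro z ⟨hzU', hzspan⟩
      have hzV : z ∈ V := hspanC hzspan
      have hmem : (⟨z, hzV⟩ : V) ∈ f '' {y | ∀ c, 0 < y c} := by
        rw [← hU'eq]; exact hzU'
      obtain ⟨y, hy, hyz⟩ := hmem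
      refine ⟨y, fun c => (hy c).le, ?_⟩
      have := congrArg Subtype.val hyz
      simp only [f, LinearMap.coe_toContinuousLinearMap', LinearMap.rangeRestrict] at this
      rw [← this]
      simp [Matrix.mulVecLin_apply, LinearMap.codRestrict]
  · -- ri C → ri P
    intro h
    obtain ⟨hspm, U, hU, htU, hsub⟩ := (memII_aux Cset t).mp h
    refine (memII_aux Pset t).mpr ⟨subset_affineSpan ℝ Pset htP, U, hU, htU, ?_⟩
    rintro z ⟨hzU, hz⟩
    have hz' : z ∈ affineSpan ℝ Cset := affineSpan_mono ℝ hPC hz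
    exact hCapP ⟨hsub ⟨hzU, hz'⟩, hz⟩
end
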